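/- arXiv:1310.0291 — 4 statements merged into one kernel-verified Lean document; each statement's English description precedes it below -/
import Mathlib

section
/- Regret identity for the Poissonian loss: under the hypotheses above with Q̂ = E[Q|𝒢] and Z a positive 𝒢-measurable estimator (with all relevant integrability), E[l(Q, Z)] − E[l(Q, Q̂)] = E[l(Q̂, Z)], where l(q, q̌) = q·log(q/q̌) − q + q̌. -/
open MeasureTheory

private lemma integral_split_aux {Ω : Type*} {mΩ : MeasurableSpace Ω} {μ : MeasureTheory.Measure Ω}
    {f g h k : Ω → ℝ} (hf : Integrable f μ) (hg : Integrable g μ)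
    (hh : Integrable h μ) (hk : Integrable k μ) :
    ∫ ω, (f ω - g ω - h ω + k ω) ∂μ
      = ∫ ω, f ω ∂μ - ∫ ω, g ω ∂μ - ∫ ω, h ω ∂μ + ∫ ω, k ω ∂μ := by
  have h1 := integral_add ((hf.sub hg).sub hh) hk
  have h2 := integral_sub (hf.sub hg) hh
  have h3 := integral_sub hf hg
  simp only [Pi.add_apply, Pi.sub_apply] at h1 h2 h3
  rw [h1, h2, h3]

/-- Regret identity for the Poissonian loss `l(q, q̌) = q·log(q/q̌) − q + q̌`: with
`Q̂ = E[Q|m]` and `Z` a positive `m`-measurable estimator,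
`E[l(Q, Z)] − E[l(Q, Q̂)] = E[l(Q̂, Z)]`. -/
theorem poisson_loss_regret_identity {Ω : Type*} {mΩ : MeasurableSpace Ω}
    {μ : Measure Ω} [IsProbabilityMeasure μ] {m : MeasurableSpace Ω} (hm : m ≤ mΩ)
    (Q Z : Ω → ℝ)
    (hQ0 : 0 ≤ᵐ[μ] Q) (hQint : Integrable Q μ)
    (hQlog : Integrable (fun ω => Q ω * Real.log (Q ω)) μ)
    (hZm : StronglyMeasurable[m] Z) (hZpos : ∀ᵐ ω ∂μ, 0 < Z ω)
    (hZint : Integrable Z μ)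
    (hQlogZ : Integrable (fun ω => Q ω * Real.log (Z ω)) μ)
    (hcpos : ∀ᵐ ω ∂μ, 0 < (μ[Q|m]) ω)
    (hQlogc : Integrable (fun ω => Q ω * Real.log ((μ[Q|m]) ω)) μ) :
    (∫ ω, (Q ω * Real.log (Q ω / Z ω) - Q ω + Z ω) ∂μ)
        - ∫ ω, (Q ω * Real.log (Q ω / (μ[Q|m]) ω) - Q ω + (μ[Q|m]) ω) ∂μ
      = ∫ ω, ((μ[Q|m]) ω * Real.log ((μ[Q|m]) ω / Z ω) - (μ[Q|m]) ω + Z ω) ∂μ := by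
  set c : Ω → ℝ := μ[Q|m] with hc
  have hcint : Integrable c μ := integrable_condExp
  have hcsm : StronglyMeasurable[m] c := stronglyMeasurable_condExp
  have hlogZ : StronglyMeasurable[m] (fun ω => Real.log (Z ω)) :=
    (Measurable.log hZm.measurable).stronglyMeasurable
  have hlogc : StronglyMeasurable[m] (fun ω => Real.log (c ω)) :=
    (Measurable.log hcsm.measurable).stronglyMeasurable
  -- pull-out: c * log Z = E[Q log Z | m] a.e.
  have key1 : (μ[(fun ω => Real.log (Z ω)) * Q|m]) =ᵐ[μ]
      (fun ω => Real.log (Z ω)) * c := by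
    refine condExp_mul_of_stronglyMeasurable_left hlogZ ?_ hQint
    exact hQlogZ.congr (by filter_upwards with ω using by simp [mul_comm])
  have key2 : (μ[(fun ω => Real.log (c ω)) * Q|m]) =ᵐ[μ]
      (fun ω => Real.log (c ω)) * c := by
    refine condExp_mul_of_stronglyMeasurable_left hlogc ?_ hQint
    exact hQlogc.congr (by filter_upwards with ω using by simp [mul_comm])
  have hclogZint : Integrable (fun ω => c ω * Real.log (Z ω)) μ :=
    (integrable_condExp.congr key1).congr
      (by filter_upwards with ω using by simp [mul_comm])
  have hclogcint : Integrable (fun ω => c ω * Real.log (c ω)) μ :=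
    (integrable_condExp.congr key2).congr
      (by filter_upwards with ω using by simp [mul_comm])
  have hintc : ∫ ω, c ω ∂μ = ∫ ω, Q ω ∂μ := integral_condExp hm
  have hintclogZ : ∫ ω, c ω * Real.log (Z ω) ∂μ = ∫ ω, Q ω * Real.log (Z ω) ∂μ := by
    calc ∫ ω, c ω * Real.log (Z ω) ∂μ
        = ∫ ω, ((fun ω => Real.log (Z ω)) * c) ω ∂μ := by
          refine integral_congr_ae ?_
          filter_upwards with ω using by simp [mul_comm]
      _ = ∫ ω, (μ[(fun ω => Real.log (Z ω)) * Q|m]) ω ∂μ :=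
          (integral_congr_ae key1).symm
      _ = ∫ ω, ((fun ω => Real.log (Z ω)) * Q) ω ∂μ := integral_condExp hm
      _ = ∫ ω, Q ω * Real.log (Z ω) ∂μ := by
          refine integral_congr_ae ?_
          filter_upwards with ω using by simp [mul_comm]
  have hintclogc : ∫ ω, c ω * Real.log (c ω) ∂μ = ∫ ω, Q ω * Real.log (c ω) ∂μ := by
    calc ∫ ω, c ω * Real.log (c ω) ∂μ
        = ∫ ω, ((fun ω => Real.log (c ω)) * c) ω ∂μ := by
          refine integral_congr_ae ?_
          filter_upwards with ω using by simp [mul_comm]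
      _ = ∫ ω, (μ[(fun ω => Real.log (c ω)) * Q|m]) ω ∂μ :=
          (integral_congr_ae key2).symm
      _ = ∫ ω, ((fun ω => Real.log (c ω)) * Q) ω ∂μ := integral_condExp hm
      _ = ∫ ω, Q ω * Real.log (c ω) ∂μ := by
          refine integral_congr_ae ?_
          filter_upwards with ω using by simp [mul_comm]
  -- expand the three integrals
  have e1 : ∫ ω, (Q ω * Real.log (Q ω / Z ω) - Q ω + Z ω) ∂μ
      = ∫ ω, Q ω * Real.log (Q ω) ∂μ - ∫ ω, Q ω * Real.log (Z ω) ∂μ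
        - ∫ ω, Q ω ∂μ + ∫ ω, Z ω ∂μ := by
    rw [show (∫ ω, (Q ω * Real.log (Q ω / Z ω) - Q ω + Z ω) ∂μ)
        = ∫ ω, (Q ω * Real.log (Q ω) - Q ω * Real.log (Z ω) - Q ω + Z ω) ∂μ from
      integral_congr_ae (by
        filter_upwards [hQ0, hZpos] with ω hQω hZω
        rcases eq_or_lt_of_le hQω with h | h
        · simp [← h]
        · rw [Real.log_div h.ne' hZω.ne']; ring)]
    exact integral_split_aux hQlog hQlogZ hQint hZint
  have e2 : ∫ ω, (Q ω * Real.log (Q ω / c ω) - Q ω + c ω) ∂μ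
      = ∫ ω, Q ω * Real.log (Q ω) ∂μ - ∫ ω, Q ω * Real.log (c ω) ∂μ
        - ∫ ω, Q ω ∂μ + ∫ ω, c ω ∂μ := by
    rw [show (∫ ω, (Q ω * Real.log (Q ω / c ω) - Q ω + c ω) ∂μ)
        = ∫ ω, (Q ω * Real.log (Q ω) - Q ω * Real.log (c ω) - Q ω + c ω) ∂μ from
      integral_congr_ae (by
        filter_upwards [hQ0, hcpos] with ω hQω hcω
        rcases eq_or_lt_of_le hQω with h | h
        · simp [← h]
        · rw [Real.log_div h.ne' hcω.ne']; ring)]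
    exact integral_split_aux hQlog hQlogc hQint hcint
  have e3 : ∫ ω, (c ω * Real.log (c ω / Z ω) - c ω + Z ω) ∂μ
      = ∫ ω, c ω * Real.log (c ω) ∂μ - ∫ ω, c ω * Real.log (Z ω) ∂μ
        - ∫ ω, c ω ∂μ + ∫ ω, Z ω ∂μ := by
    rw [show (∫ ω, (c ω * Real.log (c ω / Z ω) - c ω + Z ω) ∂μ)
        = ∫ ω, (c ω * Real.log (c ω) - c ω * Real.log (Z ω) - c ω + Z ω) ∂μ from
      integral_congr_ae (by
        filter_upwards [hcpos, hZpos] with ω hcω hZω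
        rw [Real.log_div hcω.ne' hZω.ne']; ring)]
    exact integral_split_aux hclogcint hclogZint hcint hZint
  rw [e1, e2, e3, hintc, hintclogZ, hintclogc]
  ring
end

section
/- Compensation identity: with notation as above, for any probability measure Q with P_θ ≪ Q for π-a.e. θ, ∫ D(P_θ‖Q) dπ(θ) = ∫ D(P_θ‖P̄) dπ(θ) + D(P̄‖Q), where P̄ = ∫ P_θ dπ(θ). -/
open MeasureTheory

/-- Relative entropy `D(P‖P') = ∫ log(dP/dP') dP`. -/
noncomputable def relEntropy {Ω : Type*} [MeasurableSpace Ω] (P P' : Measure Ω) : ℝ :=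
  ∫ ω, Real.log ((P.rnDeriv P' ω).toReal) ∂P

/-- Compensation identity:
`∫ D(P_θ‖Q) dπ(θ) = ∫ D(P_θ‖P̄) dπ(θ) + D(P̄‖Q)` where `P̄ = ∫ P_θ dπ(θ)`. -/
theorem compensation_identity {Θ Y : Type*} [MeasurableSpace Θ]
    [MeasurableSpace Y] (P : Θ → Measure Y) (hPmeas : Measurable P)
    [∀ θ, IsProbabilityMeasure (P θ)]
    (π : Measure Θ) [IsProbabilityMeasure π]
    (Q : Measure Y) [IsProbabilityMeasure Q]
    (hac : ∀ᵐ θ ∂π, P θ ≪ Q)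
    (hintQ : ∀ᵐ θ ∂π,
      Integrable (fun y => Real.log (((P θ).rnDeriv Q y).toReal)) (P θ))
    (hintMix : ∀ᵐ θ ∂π,
      Integrable (fun y => Real.log (((P θ).rnDeriv (π.bind P) y).toReal)) (P θ))
    (hmixQ : Integrable
      (fun y => Real.log (((π.bind P).rnDeriv Q y).toReal)) (π.bind P))
    (hθQ : Integrable (fun θ => relEntropy (P θ) Q) π)
    (hθMix : Integrable (fun θ => relEntropy (P θ) (π.bind P)) π) :
    ∫ θ, relEntropy (P θ) Q ∂π
      = (∫ θ, relEntropy (P θ) (π.bind P) ∂π) + relEntropy (π.bind P) Q := by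
  set M := π.bind P with hM
  haveI hMprob : IsProbabilityMeasure M := by
    constructor
    rw [hM, Measure.bind_apply MeasurableSet.univ hPmeas.aemeasurable]
    simp [measure_univ]
  set g := M.rnDeriv Q with hg
  have hgmeas : Measurable g := Measure.measurable_rnDeriv _ _
  -- M ≪ Q
  have hMQ : M ≪ Q := by
    refine Measure.AbsolutelyContinuous.mk fun s hs hQs => ?_
    rw [hM, Measure.bind_apply hs hPmeas.aemeasurable]
    have hm : Measurable fun θ => P θ s := (Measure.measurable_coe hs).comp hPmeas
    rw [lintegral_eq_zero_iff hm]
    filter_upwards [hac] with θ hθ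
    exact hθ hQs
  -- the zero set of g
  set Z := {y | g y = 0} with hZdef
  have hZmeas : MeasurableSet Z := hgmeas (measurableSet_singleton 0)
  have hMZ : M Z = 0 := by
    rw [← Measure.setLIntegral_rnDeriv hMQ Z]
    rw [setLIntegral_congr_fun hZmeas (fun y hy => hy)]
    simp
  have hPZ : ∀ᵐ θ ∂π, P θ Z = 0 := by
    have h0 : ∫⁻ θ, P θ Z ∂π = 0 := by
      rw [← Measure.bind_apply hZmeas hPmeas.aemeasurable]; exact hMZ
    have hm : Measurable fun θ => P θ Z := (Measure.measurable_coe hZmeas).comp hPmeas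
    rw [lintegral_eq_zero_iff hm] at h0
    filter_upwards [h0] with θ hθ
    simpa using hθ
  -- a.e. θ, P θ ≪ M
  have hPM : ∀ᵐ θ ∂π, P θ ≪ M := by
    filter_upwards [hac, hPZ] with θ hθQ hθZ
    refine Measure.AbsolutelyContinuous.mk fun s hs hMs => ?_
    have h1 : ∫⁻ y in s, g y ∂Q = 0 := by
      rw [Measure.setLIntegral_rnDeriv hMQ s]; exact hMs
    have h1' : g =ᵐ[Q.restrict s] 0 :=
      (lintegral_eq_zero_iff hgmeas).mp h1
    have h2 : ∀ᵐ y ∂Q, y ∈ s → g y = 0 := (ae_restrict_iff' hs).mp h1'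
    have hQdiff : Q (s \ Z) = 0 := by
      refine measure_mono_null (fun y hy => ?_) (ae_iff.mp h2)
      exact fun h => hy.2 (h hy.1)
    have hle : P θ s ≤ P θ Z + P θ (s \ Z) := by
      calc P θ s = P θ ((s ∩ Z) ∪ (s \ Z)) := by rw [Set.inter_union_diff]
        _ ≤ P θ (s ∩ Z) + P θ (s \ Z) := measure_union_le _ _
        _ ≤ P θ Z + P θ (s \ Z) :=
            add_le_add_left (measure_mono Set.inter_subset_right) _
    rw [hθZ, hθQ hQdiff, add_zero] at hle
    exact le_antisymm hle zero_le
  -- chain rule a.e.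
  have hchain : ∀ᵐ θ ∂π, ∀ᵐ y ∂(P θ),
      Real.log (((P θ).rnDeriv Q y).toReal)
        = Real.log (((P θ).rnDeriv M y).toReal) + Real.log ((g y).toReal) := by
    filter_upwards [hac, hPM] with θ hθQ hθM
    have h1 : (P θ).rnDeriv M * M.rnDeriv Q =ᵐ[Q] (P θ).rnDeriv Q :=
      Measure.rnDeriv_mul_rnDeriv hθM
    have h1' : ∀ᵐ y ∂(P θ),
        ((P θ).rnDeriv M * M.rnDeriv Q) y = (P θ).rnDeriv Q y :=
      h1.filter_mono hθQ.ae_le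
    have hpos1 : ∀ᵐ y ∂(P θ), 0 < (P θ).rnDeriv M y := Measure.rnDeriv_pos hθM
    have hfin1 : ∀ᵐ y ∂(P θ), (P θ).rnDeriv M y < ⊤ :=
      (Measure.rnDeriv_lt_top _ _).filter_mono hθM.ae_le
    have hpos2 : ∀ᵐ y ∂(P θ), 0 < g y :=
      (Measure.rnDeriv_pos hMQ).filter_mono hθM.ae_le
    have hfin2 : ∀ᵐ y ∂(P θ), g y < ⊤ :=
      (Measure.rnDeriv_lt_top _ _).filter_mono hθQ.ae_le
    filter_upwards [h1', hpos1, hfin1, hpos2, hfin2] with y hy h2 h3 h4 h5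
    rw [← hy, Pi.mul_apply, ENNReal.toReal_mul,
      Real.log_mul (ENNReal.toReal_pos h2.ne' h3.ne).ne'
        (ENNReal.toReal_pos h4.ne' h5.ne).ne']
  -- the function L = log dM/dQ
  set L : Y → ℝ := fun y => Real.log ((g y).toReal) with hL
  have hLmeas : Measurable L :=
    Real.measurable_log.comp (ENNReal.measurable_toReal.comp hgmeas)
  set fp : Y → ENNReal := fun y => ENNReal.ofReal (L y) with hfp
  set fm : Y → ENNReal := fun y => ENNReal.ofReal (-(L y)) with hfm
  have hfpmeas : Measurable fp := ENNReal.measurable_ofReal.comp hLmeas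
  have hfmmeas : Measurable fm := ENNReal.measurable_ofReal.comp hLmeas.neg
  have hbp : ∫⁻ y, fp y ∂M = ∫⁻ θ, ∫⁻ y, fp y ∂(P θ) ∂π :=
    Measure.lintegral_bind hPmeas.aemeasurable hfpmeas.aemeasurable
  have hbm : ∫⁻ y, fm y ∂M = ∫⁻ θ, ∫⁻ y, fm y ∂(P θ) ∂π :=
    Measure.lintegral_bind hPmeas.aemeasurable hfmmeas.aemeasurable
  -- finiteness from hmixQ
  have hfinp : ∫⁻ y, fp y ∂M ≠ ⊤ := by
    refine ne_of_lt (lt_of_le_of_lt (lintegral_mono fun y => ?_)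
      hmixQ.hasFiniteIntegral)
    rw [← ofReal_norm]
    exact ENNReal.ofReal_le_ofReal (le_abs_self _)
  have hfinm : ∫⁻ y, fm y ∂M ≠ ⊤ := by
    refine ne_of_lt (lt_of_le_of_lt (lintegral_mono fun y => ?_)
      hmixQ.hasFiniteIntegral)
    rw [← ofReal_norm]
    exact ENNReal.ofReal_le_ofReal (neg_le_abs _)
  set A : Θ → ENNReal := fun θ => ∫⁻ y, fp y ∂(P θ) with hA
  set B : Θ → ENNReal := fun θ => ∫⁻ y, fm y ∂(P θ) with hB
  have hAmeas : Measurable A := (Measure.measurable_lintegral hfpmeas).comp hPmeas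
  have hBmeas : Measurable B := (Measure.measurable_lintegral hfmmeas).comp hPmeas
  have hAfin : ∫⁻ θ, A θ ∂π ≠ ⊤ := by rw [← hbp]; exact hfinp
  have hBfin : ∫⁻ θ, B θ ∂π ≠ ⊤ := by rw [← hbm]; exact hfinm
  have hAae : ∀ᵐ θ ∂π, A θ < ⊤ := ae_lt_top hAmeas hAfin
  have hBae : ∀ᵐ θ ∂π, B θ < ⊤ := ae_lt_top hBmeas hBfin
  have hAint : Integrable (fun θ => (A θ).toReal) π :=
    integrable_toReal_of_lintegral_ne_top hAmeas.aemeasurable hAfin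
  have hBint : Integrable (fun θ => (B θ).toReal) π :=
    integrable_toReal_of_lintegral_ne_top hBmeas.aemeasurable hBfin
  have hAval : ∫ θ, (A θ).toReal ∂π = (∫⁻ y, fp y ∂M).toReal := by
    rw [integral_toReal hAmeas.aemeasurable hAae, hbp]
  have hBval : ∫ θ, (B θ).toReal ∂π = (∫⁻ y, fm y ∂M).toReal := by
    rw [integral_toReal hBmeas.aemeasurable hBae, hbm]
  -- relEntropy M Q
  have hMQval : relEntropy M Q
      = (∫⁻ y, fp y ∂M).toReal - (∫⁻ y, fm y ∂M).toReal := by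
    have := integral_eq_lintegral_pos_part_sub_lintegral_neg_part hmixQ
    simpa [relEntropy] using this
  -- key a.e. decomposition
  have key : ∀ᵐ θ ∂π, relEntropy (P θ) Q
      = relEntropy (P θ) M + ((A θ).toReal - (B θ).toReal) := by
    filter_upwards [hchain, hintQ, hintMix] with θ hch hiQ hiM
    have hiL : Integrable L (P θ) := by
      refine (hiQ.sub hiM).congr ?_
      filter_upwards [hch] with y hy
      simp only [Pi.sub_apply]
      rw [hy]; ring
    have h1 : relEntropy (P θ) Q = relEntropy (P θ) M + ∫ y, L y ∂(P θ) := by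
      simp only [relEntropy]
      rw [← integral_add hiM hiL]
      exact integral_congr_ae (by filter_upwards [hch] with y hy; exact hy)
    rw [h1, integral_eq_lintegral_pos_part_sub_lintegral_neg_part hiL]
  calc ∫ θ, relEntropy (P θ) Q ∂π
      = ∫ θ, (relEntropy (P θ) M + ((A θ).toReal - (B θ).toReal)) ∂π :=
        integral_congr_ae key
    _ = (∫ θ, relEntropy (P θ) M ∂π)
        + ((∫ θ, (A θ).toReal ∂π) - (∫ θ, (B θ).toReal ∂π)) := by
        have hsub : Integrable (fun θ => (A θ).toReal - (B θ).toReal) π := by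
          exact hAint.sub hBint
        rw [integral_add hθMix hsub, integral_sub hAint hBint]
    _ = (∫ θ, relEntropy (P θ) M ∂π) + relEntropy M Q := by
        rw [hAval, hBval, hMQval]
end

section
/- Finite redundancy-capacity theorem: let Θ be a finite set and (P_θ)_{θ∈Θ} probability measures on a finite set Y. Then min over probability measures Q on Y of max over θ of D(P_θ‖Q) equals max over priors π on Θ of I_π(θ;Y), where I_π(θ;Y) = Σ_θ π(θ) D(P_θ‖P̄_π) and P̄_π = Σ_θ π(θ) P_θ. -/
open scoped ENNReal BigOperators

noncomputable def finKL {Y : Type*} [Fintype Y] (p q : Y → ℝ) : ℝ≥0∞ :=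
  if ∀ y, q y = 0 → p y = 0 then
    ENNReal.ofReal (∑ y, p y * Real.log (p y / q y))
  else ⊤

namespace RC
variable {Y : Type*} [Fintype Y]

noncomputable def klR (p q : Y → ℝ) : ℝ := ∑ y, p y * Real.log (p y / q y)

lemma finKL_eq_ofReal (p q : Y → ℝ) (h : ∀ y, q y = 0 → p y = 0) :
    finKL p q = ENNReal.ofReal (klR p q) := if_pos h

lemma finKL_eq_top (p q : Y → ℝ) (h : ¬ ∀ y, q y = 0 → p y = 0) :
    finKL p q = ⊤ := if_neg h

lemma sub_le_mul_log_div {a b : ℝ} (ha : 0 ≤ a) (hb : 0 ≤ b) (hab : b = 0 → a = 0) :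
    a - b ≤ a * Real.log (a / b) := by
  rcases ha.eq_or_lt with h | h
  · simp [← h, hb]
  · have hb' : 0 < b := by
      rcases hb.eq_or_lt with h' | h'
      · exact absurd (hab h'.symm) (by positivity)
      · exact h'
    have hlog : Real.log (b / a) ≤ b / a - 1 := Real.log_le_sub_one_of_pos (by positivity)
    have : 1 - b / a ≤ Real.log (a / b) := by
      rw [Real.log_div hb'.ne' h.ne'] at hlog
      rw [Real.log_div h.ne' hb'.ne']
      linarith
    calc a - b = a * (1 - b / a) := by field_simp
    _ ≤ a * Real.log (a / b) := by nlinarith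

lemma klR_nonneg {p q : Y → ℝ} (hp0 : ∀ y, 0 ≤ p y) (hq0 : ∀ y, 0 ≤ q y)
    (hp1 : ∑ y, p y = 1) (hq1 : ∑ y, q y = 1)
    (hac : ∀ y, q y = 0 → p y = 0) : 0 ≤ klR p q := by
  have h : ∑ y, (p y - q y) ≤ klR p q :=
    Finset.sum_le_sum fun y _ => sub_le_mul_log_div (hp0 y) (hq0 y) (hac y)
  rwa [Finset.sum_sub_distrib, hp1, hq1, sub_self] at h

variable {Θ : Type*} [Fintype Θ]

lemma comp_real (π : Θ → ℝ) (P : Θ → Y → ℝ) (q : Y → ℝ)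
    (hπ0 : ∀ θ, 0 ≤ π θ) (hP0 : ∀ θ y, 0 ≤ P θ y)
    (hac : ∀ θ, 0 < π θ → ∀ y, q y = 0 → P θ y = 0) :
    ∑ θ, π θ * klR (P θ) q
      = ∑ θ, π θ * klR (P θ) (fun y => ∑ θ', π θ' * P θ' y)
        + klR (fun y => ∑ θ', π θ' * P θ' y) q := by
  set Pb : Y → ℝ := fun y => ∑ θ', π θ' * P θ' y with hPb
  have key : ∀ θ y, π θ * (P θ y * Real.log (P θ y / q y))
      = π θ * (P θ y * Real.log (P θ y / Pb y))
        + (π θ * P θ y) * Real.log (Pb y / q y) := by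
    intro θ y
    rcases (hπ0 θ).eq_or_lt with hπ | hπ
    · simp [← hπ]
    rcases (hP0 θ y).eq_or_lt with hp | hp
    · simp [← hp]
    have hq : q y ≠ 0 := fun h => (hp.ne' (hac θ hπ y h))
    have hPby : 0 < Pb y := by
      have := Finset.single_le_sum (f := fun θ' => π θ' * P θ' y)
        (fun θ' _ => mul_nonneg (hπ0 θ') (hP0 θ' y)) (Finset.mem_univ θ)
      have h2 : 0 < π θ * P θ y := mul_pos hπ hp
      exact lt_of_lt_of_le h2 this
    rw [Real.log_div hp.ne' hq, Real.log_div hp.ne' hPby.ne', Real.log_div hPby.ne' hq]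
    ring
  calc ∑ θ, π θ * klR (P θ) q = ∑ θ, ∑ y, π θ * (P θ y * Real.log (P θ y / q y)) := by
        simp [klR, Finset.mul_sum]
    _ = ∑ θ, ∑ y, (π θ * (P θ y * Real.log (P θ y / Pb y))
          + (π θ * P θ y) * Real.log (Pb y / q y)) := by
        simp only [key]
    _ = ∑ θ, π θ * klR (P θ) Pb + ∑ y, (∑ θ, π θ * P θ y) * Real.log (Pb y / q y) := by
        simp only [Finset.sum_add_distrib]
        rw [Finset.sum_comm (f := fun θ y => (π θ * P θ y) * Real.log (Pb y / q y))]
        simp [klR, Finset.mul_sum, Finset.sum_mul]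
    _ = ∑ θ, π θ * klR (P θ) Pb + klR Pb q := by
        simp [klR, hPb]

lemma sum_ofReal_mul_finKL (π : Θ → ℝ) (P : Θ → Y → ℝ) (v : Y → ℝ)
    (hπ0 : ∀ θ, 0 ≤ π θ)
    (hfin : ∀ θ, 0 < π θ → ∀ y, v y = 0 → P θ y = 0)
    (hnn : ∀ θ, 0 < π θ → 0 ≤ klR (P θ) v) :
    ∑ θ, ENNReal.ofReal (π θ) * finKL (P θ) v
      = ENNReal.ofReal (∑ θ, π θ * klR (P θ) v) := by
  rw [ENNReal.ofReal_sum_of_nonneg]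
  · refine Finset.sum_congr rfl fun θ _ => ?_
    rcases (hπ0 θ).eq_or_lt with hπ | hπ
    · simp [← hπ]
    · rw [finKL_eq_ofReal _ _ (hfin θ hπ), ← ENNReal.ofReal_mul (hπ0 θ)]
  · intro θ _
    rcases (hπ0 θ).eq_or_lt with hπ | hπ
    · simp [← hπ]
    · exact mul_nonneg (hπ0 θ) (hnn θ hπ)

lemma Pbar_nonneg (π : Θ → ℝ) (P : Θ → Y → ℝ) (hπ0 : ∀ θ, 0 ≤ π θ)
    (hP0 : ∀ θ y, 0 ≤ P θ y) (y : Y) : 0 ≤ ∑ θ', π θ' * P θ' y :=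
  Finset.sum_nonneg fun θ' _ => mul_nonneg (hπ0 θ') (hP0 θ' y)

lemma Pbar_sum (π : Θ → ℝ) (P : Θ → Y → ℝ) (hπ1 : ∑ θ, π θ = 1)
    (hP1 : ∀ θ, ∑ y, P θ y = 1) : ∑ y, ∑ θ', π θ' * P θ' y = 1 := by
  rw [Finset.sum_comm]
  simp only [← Finset.mul_sum]
  simp [hP1, hπ1]

lemma Pbar_ac (π : Θ → ℝ) (P : Θ → Y → ℝ) (hπ0 : ∀ θ, 0 ≤ π θ)
    (hP0 : ∀ θ y, 0 ≤ P θ y) :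
    ∀ θ, 0 < π θ → ∀ y, (∑ θ', π θ' * P θ' y) = 0 → P θ y = 0 := by
  intro θ hπ y hy
  have := (Finset.sum_eq_zero_iff_of_nonneg
    (fun θ' _ => mul_nonneg (hπ0 θ') (hP0 θ' y))).1 hy θ (Finset.mem_univ θ)
  exact (mul_eq_zero.1 this).resolve_left hπ.ne'

lemma comp_ennreal (π : Θ → ℝ) (P : Θ → Y → ℝ) (q : Y → ℝ)
    (hπ0 : ∀ θ, 0 ≤ π θ) (hπ1 : ∑ θ, π θ = 1)
    (hP0 : ∀ θ y, 0 ≤ P θ y) (hP1 : ∀ θ, ∑ y, P θ y = 1)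
    (hq0 : ∀ y, 0 ≤ q y) (hq1 : ∑ y, q y = 1) :
    ∑ θ, ENNReal.ofReal (π θ) * finKL (P θ) q
      = ∑ θ, ENNReal.ofReal (π θ) * finKL (P θ) (fun y => ∑ θ', π θ' * P θ' y)
        + finKL (fun y => ∑ θ', π θ' * P θ' y) q := by
  set Pb : Y → ℝ := fun y => ∑ θ', π θ' * P θ' y with hPb
  have hPb0 : ∀ y, 0 ≤ Pb y := Pbar_nonneg π P hπ0 hP0
  have hPb1 : ∑ y, Pb y = 1 := Pbar_sum π P hπ1 hP1
  have hacPb : ∀ θ, 0 < π θ → ∀ y, Pb y = 0 → P θ y = 0 := Pbar_ac π P hπ0 hP0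
  by_cases hgood : ∀ θ, 0 < π θ → ∀ y, q y = 0 → P θ y = 0
  · have hqPb : ∀ y, q y = 0 → Pb y = 0 := by
      intro y hy
      refine Finset.sum_eq_zero fun θ' _ => ?_
      rcases (hπ0 θ').eq_or_lt with hπ | hπ
      · simp [← hπ]
      · simp [hgood θ' hπ y hy]
    rw [sum_ofReal_mul_finKL π P q hπ0 hgood
        (fun θ hπ => klR_nonneg (hP0 θ) hq0 (hP1 θ) hq1 (hgood θ hπ)),
      sum_ofReal_mul_finKL π P Pb hπ0 hacPb
        (fun θ hπ => klR_nonneg (hP0 θ) hPb0 (hP1 θ) hPb1 (hacPb θ hπ)),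
      finKL_eq_ofReal _ _ hqPb,
      ← ENNReal.ofReal_add
        (Finset.sum_nonneg fun θ _ => ?_)
        (klR_nonneg hPb0 hq0 hPb1 hq1 hqPb),
      comp_real π P q hπ0 hP0 hgood]
    rcases (hπ0 θ).eq_or_lt with hπ | hπ
    · simp [← hπ]
    · exact mul_nonneg (hπ0 θ) (klR_nonneg (hP0 θ) hPb0 (hP1 θ) hPb1 (hacPb θ hπ))
  · push_neg at hgood
    obtain ⟨θ0, hθ0, y0, hqy0, hPy0⟩ := hgood
    have hPbtop : finKL Pb q = ⊤ := by
      refine finKL_eq_top _ _ fun h => ?_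
      have := h y0 hqy0
      exact hPy0 (hacPb θ0 hθ0 y0 this)
    have hθtop : finKL (P θ0) q = ⊤ := finKL_eq_top _ _ fun h => hPy0 (h y0 hqy0)
    have hLHS : ∑ θ, ENNReal.ofReal (π θ) * finKL (P θ) q = ⊤ := by
      refine top_le_iff.1 ?_
      calc (⊤ : ℝ≥0∞) = ENNReal.ofReal (π θ0) * finKL (P θ0) q := by
            rw [hθtop, ENNReal.mul_top (ENNReal.ofReal_pos.2 hθ0).ne']
        _ ≤ _ := Finset.single_le_sum
            (f := fun θ => ENNReal.ofReal (π θ) * finKL (P θ) q)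
            (fun θ _ => zero_le) (Finset.mem_univ θ0)
    rw [hLHS, hPbtop, add_top]

noncomputable def Irf (P : Θ → Y → ℝ) (π : Θ → ℝ) : ℝ :=
  ∑ y, Real.negMulLog (∑ θ, π θ * P θ y)
    - ∑ θ, π θ * ∑ y, Real.negMulLog (P θ y)

lemma Irf_continuous (P : Θ → Y → ℝ) : Continuous (Irf P) := by
  apply Continuous.sub
  · exact continuous_finset_sum _ fun y _ =>
      Real.continuous_negMulLog.comp
        (continuous_finset_sum _ fun θ _ => (continuous_apply θ).mul continuous_const)
  · exact continuous_finset_sum _ fun θ _ => (continuous_apply θ).mul continuous_const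

lemma Ir_eq (π : Θ → ℝ) (P : Θ → Y → ℝ)
    (hπ0 : ∀ θ, 0 ≤ π θ) (hP0 : ∀ θ y, 0 ≤ P θ y) :
    ∑ θ, π θ * klR (P θ) (fun y => ∑ θ', π θ' * P θ' y) = Irf P π := by
  set Pb : Y → ℝ := fun y => ∑ θ', π θ' * P θ' y with hPb
  have key : ∀ θ y, π θ * (P θ y * Real.log (P θ y / Pb y))
      = π θ * (P θ y * Real.log (P θ y)) - (π θ * P θ y) * Real.log (Pb y) := by
    intro θ y
    rcases (hπ0 θ).eq_or_lt with hπ | hπ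
    · simp [← hπ]
    rcases (hP0 θ y).eq_or_lt with hp | hp
    · simp [← hp]
    have hPby : 0 < Pb y := by
      have := Finset.single_le_sum (f := fun θ' => π θ' * P θ' y)
        (fun θ' _ => mul_nonneg (hπ0 θ') (hP0 θ' y)) (Finset.mem_univ θ)
      exact lt_of_lt_of_le (mul_pos hπ hp) this
    rw [Real.log_div hp.ne' hPby.ne']
    ring
  have h1 : ∑ θ, π θ * klR (P θ) Pb
      = ∑ θ, ∑ y, (π θ * (P θ y * Real.log (P θ y)) - (π θ * P θ y) * Real.log (Pb y)) := by
    simp only [klR, Finset.mul_sum, key]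
  rw [h1]
  simp only [Finset.sum_sub_distrib]
  rw [Finset.sum_comm (f := fun θ y => (π θ * P θ y) * Real.log (Pb y))]
  unfold Irf
  simp only [Real.negMulLog, ← Finset.sum_mul]
  simp only [hPb, neg_mul, mul_neg, Finset.sum_neg_distrib, sub_neg_eq_add, Finset.mul_sum]
  ring

lemma perturb_bound (P : Θ → Y → ℝ) (hP0 : ∀ θ y, 0 ≤ P θ y) (hP1 : ∀ θ, ∑ y, P θ y = 1)
    (πs : Θ → ℝ) (hπ0 : ∀ θ, 0 ≤ πs θ) (hπ1 : ∑ θ, πs θ = 1)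
    (hmax : ∀ π ∈ stdSimplex ℝ Θ, Irf P π ≤ Irf P πs) (θ0 : Θ)
    {t : ℝ} (ht0 : 0 < t) (ht1 : t < 1) :
    klR (P θ0) (fun y => (1 - t) * (∑ θ', πs θ' * P θ' y) + t * P θ0 y) ≤ Irf P πs := by
  classical
  set Qs : Y → ℝ := fun y => ∑ θ', πs θ' * P θ' y with hQs
  set Qt : Y → ℝ := fun y => (1 - t) * Qs y + t * P θ0 y with hQt
  set πt : Θ → ℝ := fun θ => (1 - t) * πs θ + t * (if θ = θ0 then 1 else 0) with hπt
  have hπt0 : ∀ θ, 0 ≤ πt θ := by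
    intro θ
    have : (0:ℝ) ≤ (if θ = θ0 then (1:ℝ) else 0) := by positivity
    have h1 : (0:ℝ) ≤ (1 - t) * πs θ := mul_nonneg (by linarith) (hπ0 θ)
    have h2 : (0:ℝ) ≤ t * (if θ = θ0 then (1:ℝ) else 0) := mul_nonneg ht0.le this
    simpa [hπt] using add_nonneg h1 h2
  have hπt1 : ∑ θ, πt θ = 1 := by
    simp [hπt, Finset.sum_add_distrib, ← Finset.mul_sum, hπ1, Finset.sum_ite_eq']
  have hmem : πt ∈ stdSimplex ℝ Θ := ⟨hπt0, hπt1⟩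
  have hQs0 : ∀ y, 0 ≤ Qs y := Pbar_nonneg πs P hπ0 hP0
  have hQs1 : ∑ y, Qs y = 1 := Pbar_sum πs P hπ1 hP1
  have hQt0 : ∀ y, 0 ≤ Qt y := fun y =>
    add_nonneg (mul_nonneg (by linarith) (hQs0 y)) (mul_nonneg ht0.le (hP0 θ0 y))
  have hQt1 : ∑ y, Qt y = 1 := by
    simp [hQt, Finset.sum_add_distrib, ← Finset.mul_sum, hQs1, hP1 θ0]
  have hQtzero : ∀ y, Qt y = 0 → Qs y = 0 ∧ P θ0 y = 0 := by
    intro y hy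
    have h1 : (0:ℝ) ≤ (1 - t) * Qs y := mul_nonneg (by linarith) (hQs0 y)
    have h2 : (0:ℝ) ≤ t * P θ0 y := mul_nonneg ht0.le (hP0 θ0 y)
    have hy' : (1 - t) * Qs y + t * P θ0 y = 0 := hy
    constructor
    · have : (1 - t) * Qs y = 0 := by linarith
      rcases mul_eq_zero.1 this with h | h
      · linarith
      · exact h
    · have : t * P θ0 y = 0 := by linarith
      rcases mul_eq_zero.1 this with h | h
      · linarith
      · exact h
  have hQtP : ∀ y, ∑ θ', πt θ' * P θ' y = Qt y := by
    intro y
    simp [hπt, hQt, add_mul, Finset.sum_add_distrib, mul_assoc, ← Finset.mul_sum,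
      ite_mul, one_mul, zero_mul, Finset.sum_ite_eq', hQs]
  -- maximality
  have hIrt : Irf P πt ≤ Irf P πs := hmax πt hmem
  have e1 : ∑ θ, πt θ * klR (P θ) Qt = Irf P πt := by
    have := Ir_eq πt P hπt0 hP0
    have h2 : (fun y => ∑ θ', πt θ' * P θ' y) = Qt := funext hQtP
    rwa [h2] at this
  have e2 : ∑ θ, πt θ * klR (P θ) Qt
      = (1 - t) * ∑ θ, πs θ * klR (P θ) Qt + t * klR (P θ0) Qt := by
    simp [hπt, add_mul, Finset.sum_add_distrib, mul_assoc, ← Finset.mul_sum,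
      ite_mul, one_mul, zero_mul, Finset.sum_ite_eq']
  have hacs : ∀ θ, 0 < πs θ → ∀ y, Qt y = 0 → P θ y = 0 := by
    intro θ hθ y hy
    exact Pbar_ac πs P hπ0 hP0 θ hθ y (hQtzero y hy).1
  have e3 : ∑ θ, πs θ * klR (P θ) Qt
      = ∑ θ, πs θ * klR (P θ) (fun y => ∑ θ', πs θ' * P θ' y) + klR Qs Qt :=
    comp_real πs P Qt hπ0 hP0 hacs
  have e4 : ∑ θ, πs θ * klR (P θ) (fun y => ∑ θ', πs θ' * P θ' y) = Irf P πs :=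
    Ir_eq πs P hπ0 hP0
  have e5 : 0 ≤ klR Qs Qt :=
    klR_nonneg hQs0 hQt0 hQs1 hQt1 (fun y hy => (hQtzero y hy).1)
  have hfin : t * klR (P θ0) Qt ≤ t * Irf P πs := by nlinarith [hIrt, e1, e2, e3, e4, e5]
  exact le_of_mul_le_mul_left hfin ht0

lemma hard_ac (P : Θ → Y → ℝ) (hP0 : ∀ θ y, 0 ≤ P θ y) (hP1 : ∀ θ, ∑ y, P θ y = 1)
    (πs : Θ → ℝ) (hπ0 : ∀ θ, 0 ≤ πs θ) (hπ1 : ∑ θ, πs θ = 1)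
    (hmax : ∀ π ∈ stdSimplex ℝ Θ, Irf P π ≤ Irf P πs) (θ0 : Θ) :
    ∀ y, (∑ θ', πs θ' * P θ' y) = 0 → P θ0 y = 0 := by
  classical
  intro y0 hQ0
  by_contra hp0'
  have hp : 0 < P θ0 y0 := (hP0 θ0 y0).lt_of_ne (Ne.symm hp0')
  set p : Y → ℝ := P θ0 with hpdef
  set Qs : Y → ℝ := fun y => ∑ θ', πs θ' * P θ' y with hQs
  have hQs0 : ∀ y, 0 ≤ Qs y := Pbar_nonneg πs P hπ0 hP0
  have hQs1 : ∑ y, Qs y = 1 := Pbar_sum πs P hπ1 hP1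
  set A : ℝ := ∑ y, p y * Real.log (p y) with hA
  set Cr : ℝ := Irf P πs with hCr
  -- lower bound on klR p (Qt t)
  have hsplit : ∀ t : ℝ, 0 < t → t < 1 →
      A - p y0 * Real.log (t * p y0)
        ≤ klR p (fun y => (1 - t) * Qs y + t * p y) := by
    intro t ht0 ht1
    set Qt : Y → ℝ := fun y => (1 - t) * Qs y + t * p y with hQt
    have hQt0 : ∀ y, 0 ≤ Qt y := fun y =>
      add_nonneg (mul_nonneg (by linarith) (hQs0 y)) (mul_nonneg ht0.le (hP0 θ0 y))
    have hQt1 : ∑ y, Qt y = 1 := by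
      simp [hQt, Finset.sum_add_distrib, ← Finset.mul_sum, hQs1, hpdef, hP1 θ0]
    have hQtle1 : ∀ y, Qt y ≤ 1 := by
      intro y
      rw [← hQt1]
      exact Finset.single_le_sum (fun y' _ => hQt0 y') (Finset.mem_univ y)
    have hterm : ∀ y, p y * Real.log (p y) - p y * Real.log (Qt y)
        ≤ p y * Real.log (p y / Qt y) := by
      intro y
      rcases (hP0 θ0 y).eq_or_lt with hpy | hpy
      · simp [hpdef, ← hpy]
      · have hQty : 0 < Qt y := by
          have : 0 < t * p y := mul_pos ht0 hpy
          have h1 : (0:ℝ) ≤ (1 - t) * Qs y := mul_nonneg (by linarith) (hQs0 y)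
          simp only [hQt]
          linarith
        rw [Real.log_div hpy.ne' hQty.ne']
        rw [mul_sub]
    have hsum : A - ∑ y, p y * Real.log (Qt y) ≤ klR p Qt := by
      have := Finset.sum_le_sum fun y (_ : y ∈ Finset.univ) => hterm y
      rw [Finset.sum_sub_distrib] at this
      exact this
    have hQty0 : Qt y0 = t * p y0 := by simp [hQt, hQ0, hQs]
    have hdrop : ∑ y, p y * Real.log (Qt y) ≤ p y0 * Real.log (t * p y0) := by
      rw [← hQty0]
      have hnp : ∀ y, p y * Real.log (Qt y) ≤ 0 := fun y =>
        mul_nonpos_of_nonneg_of_nonpos (hP0 θ0 y) (Real.log_nonpos (hQt0 y) (hQtle1 y))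
      calc ∑ y, p y * Real.log (Qt y)
          = p y0 * Real.log (Qt y0) + ∑ y ∈ Finset.univ.erase y0, p y * Real.log (Qt y) := by
            exact (Finset.add_sum_erase _ _ (Finset.mem_univ y0)).symm
        _ ≤ p y0 * Real.log (Qt y0) + 0 := by
            have : ∑ y ∈ Finset.univ.erase y0, p y * Real.log (Qt y) ≤ 0 :=
              Finset.sum_nonpos fun y _ => hnp y
            linarith
        _ = p y0 * Real.log (Qt y0) := by ring
    linarith
  -- choose t small
  set u : ℝ := (A - Cr) / p y0 - 1 with hu
  set t : ℝ := min (1/2) (Real.exp u / p y0) with htdef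
  have ht0 : 0 < t := lt_min (by norm_num) (div_pos (Real.exp_pos u) hp)
  have ht1 : t < 1 := lt_of_le_of_lt (min_le_left _ _) (by norm_num)
  have hlogt : Real.log (t * p y0) ≤ u := by
    have h1 : t * p y0 ≤ Real.exp u := by
      have : t ≤ Real.exp u / p y0 := min_le_right _ _
      calc t * p y0 ≤ (Real.exp u / p y0) * p y0 := by nlinarith
        _ = Real.exp u := by field_simp
    calc Real.log (t * p y0) ≤ Real.log (Real.exp u) :=
          Real.log_le_log (by positivity) h1
      _ = u := Real.log_exp u
  have hub := perturb_bound P hP0 hP1 πs hπ0 hπ1 hmax θ0 ht0 ht1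
  have hlb := hsplit t ht0 ht1
  have : A - p y0 * u ≤ Cr := by
    have h2 : p y0 * Real.log (t * p y0) ≤ p y0 * u :=
      mul_le_mul_of_nonneg_left hlogt hp.le
    have := hlb.trans hub
    simp only [← hCr, ← hQs, ← hpdef] at this ⊢
    linarith
  have : Cr + p y0 ≤ Cr := by
    have hAu : A - p y0 * u = Cr + p y0 := by
      rw [hu]
      field_simp
      ring
    linarith [hAu ▸ this]
  linarith

lemma hard_dir (P : Θ → Y → ℝ) (hP0 : ∀ θ y, 0 ≤ P θ y) (hP1 : ∀ θ, ∑ y, P θ y = 1)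
    (πs : Θ → ℝ) (hπ0 : ∀ θ, 0 ≤ πs θ) (hπ1 : ∑ θ, πs θ = 1)
    (hmax : ∀ π ∈ stdSimplex ℝ Θ, Irf P π ≤ Irf P πs) (θ0 : Θ) :
    finKL (P θ0) (fun y => ∑ θ', πs θ' * P θ' y) ≤ ENNReal.ofReal (Irf P πs) := by
  classical
  set p : Y → ℝ := P θ0 with hpdef
  set Qs : Y → ℝ := fun y => ∑ θ', πs θ' * P θ' y with hQs
  have hQs0 : ∀ y, 0 ≤ Qs y := Pbar_nonneg πs P hπ0 hP0
  have hac : ∀ y, Qs y = 0 → p y = 0 := hard_ac P hP0 hP1 πs hπ0 hπ1 hmax θ0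
  set Cr : ℝ := Irf P πs with hCr
  have claim3 : klR p Qs ≤ Cr := by
    refine le_of_forall_pos_le_add fun ε hε => ?_
    set M : ℝ := ∑ y, (p y)^2 / Qs y with hM
    have hM0 : 0 ≤ M :=
      Finset.sum_nonneg fun y _ => div_nonneg (sq_nonneg _) (hQs0 y)
    set t : ℝ := min (1/2) (ε / (M + 1)) with htdef
    have ht0 : 0 < t := lt_min (by norm_num) (div_pos hε (by linarith))
    have ht1 : t < 1 := lt_of_le_of_lt (min_le_left _ _) (by norm_num)
    set Qt : Y → ℝ := fun y => (1 - t) * Qs y + t * p y with hQt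
    have hQt0 : ∀ y, 0 ≤ Qt y := fun y =>
      add_nonneg (mul_nonneg (by linarith) (hQs0 y)) (mul_nonneg ht0.le (hP0 θ0 y))
    have hterm : ∀ y, p y * Real.log (p y / Qs y)
        ≤ p y * Real.log (p y / Qt y) + t * (p y)^2 / Qs y := by
      intro y
      rcases (hP0 θ0 y).eq_or_lt with hpy | hpy
      · simp [hpdef, ← hpy]
      · have hQsy : 0 < Qs y := by
          rcases (hQs0 y).eq_or_lt with h | h
          · exact absurd (hac y h.symm) (by simpa [hpdef] using hpy.ne')
          · exact h
        have hQty : 0 < Qt y := by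
          have h1 : (0:ℝ) < (1 - t) * Qs y := mul_pos (by linarith) hQsy
          have h2 : (0:ℝ) ≤ t * p y := mul_nonneg ht0.le hpy.le
          simp only [hQt]; linarith
        have hlog : Real.log (Qt y / Qs y) ≤ Qt y / Qs y - 1 :=
          Real.log_le_sub_one_of_pos (by positivity)
        have hratio : Qt y / Qs y - 1 = t * (p y - Qs y) / Qs y := by
          field_simp [hQt]
          ring
        have h3 : p y * Real.log (Qt y / Qs y) ≤ t * (p y)^2 / Qs y := by
          have h4 : p y * Real.log (Qt y / Qs y) ≤ p y * (t * (p y - Qs y) / Qs y) := by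
            rw [← hratio]
            exact mul_le_mul_of_nonneg_left hlog hpy.le
          have h5 : p y * (t * (p y - Qs y) / Qs y) ≤ t * (p y)^2 / Qs y := by
            rw [mul_div_assoc' _ _ (Qs y), div_le_div_iff_of_pos_right hQsy]
            nlinarith [mul_nonneg (mul_nonneg ht0.le hpy.le) hQsy.le]
          linarith
        have hsplit : Real.log (p y / Qs y) = Real.log (p y / Qt y) + Real.log (Qt y / Qs y) := by
          rw [Real.log_div hpy.ne' hQsy.ne', Real.log_div hpy.ne' hQty.ne',
            Real.log_div hQty.ne' hQsy.ne']
          ring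
        rw [hsplit]
        nlinarith [h3]
    have hsum : klR p Qs ≤ klR p Qt + t * M := by
      have := Finset.sum_le_sum fun y (_ : y ∈ Finset.univ) => hterm y
      rw [Finset.sum_add_distrib] at this
      simp only [klR]
      calc ∑ y, p y * Real.log (p y / Qs y)
          ≤ ∑ y, p y * Real.log (p y / Qt y) + ∑ y, t * (p y)^2 / Qs y := this
        _ = ∑ y, p y * Real.log (p y / Qt y) + t * M := by
            rw [hM, Finset.mul_sum]
            congr 1
            exact Finset.sum_congr rfl fun y _ => by ring
    have hQtb := perturb_bound P hP0 hP1 πs hπ0 hπ1 hmax θ0 ht0 ht1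
    have htM : t * M ≤ ε := by
      have h1 : t ≤ ε / (M + 1) := min_le_right _ _
      have h2 : t * M ≤ (ε / (M + 1)) * M := mul_le_mul_of_nonneg_right h1 hM0
      have h3 : (ε / (M + 1)) * M ≤ ε := by
        rw [div_mul_eq_mul_div, div_le_iff₀ (by linarith)]
        nlinarith
      linarith
    have : klR p Qt ≤ Cr := by
      simpa [hpdef, hQs, hQt, hCr] using hQtb
    linarith
  rw [finKL_eq_ofReal _ _ hac]
  exact ENNReal.ofReal_le_ofReal claim3

lemma J_eq (πs : Θ → ℝ) (P : Θ → Y → ℝ)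
    (hπ0 : ∀ θ, 0 ≤ πs θ) (hπ1 : ∑ θ, πs θ = 1)
    (hP0 : ∀ θ y, 0 ≤ P θ y) (hP1 : ∀ θ, ∑ y, P θ y = 1) :
    ∑ θ, ENNReal.ofReal (πs θ) * finKL (P θ) (fun y => ∑ θ', πs θ' * P θ' y)
      = ENNReal.ofReal (Irf P πs) := by
  rw [sum_ofReal_mul_finKL πs P _ hπ0 (Pbar_ac πs P hπ0 hP0)
      (fun θ hθ => klR_nonneg (hP0 θ) (Pbar_nonneg πs P hπ0 hP0) (hP1 θ)
        (Pbar_sum πs P hπ1 hP1) (Pbar_ac πs P hπ0 hP0 θ hθ)),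
    Ir_eq πs P hπ0 hP0]

end RC

/-- Redundancy-capacity theorem (finite case): the min-max redundancy
`⨅_Q ⨆_θ D(P_θ‖Q)` equals the capacity `⨆_π I_π(θ;Y)`, where
`I_π(θ;Y) = ∑_θ π(θ) D(P_θ‖P̄_π)` and `P̄_π = ∑_θ π(θ) P_θ`. -/
theorem redundancy_capacity {Θ Y : Type*} [Fintype Θ] [Fintype Y]
    [Nonempty Θ] [Nonempty Y]
    (P : Θ → Y → ℝ) (hP0 : ∀ θ y, 0 ≤ P θ y) (hP1 : ∀ θ, ∑ y, P θ y = 1) :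
    (⨅ q : {q : Y → ℝ // (∀ y, 0 ≤ q y) ∧ ∑ y, q y = 1},
        ⨆ θ, finKL (P θ) q.1)
      = ⨆ π : {π : Θ → ℝ // (∀ θ, 0 ≤ π θ) ∧ ∑ θ, π θ = 1},
          ∑ θ, ENNReal.ofReal (π.1 θ) *
            finKL (P θ) (fun y => ∑ θ', π.1 θ' * P θ' y) := by
  classical
  obtain ⟨πs, hπsmem, hπsmax⟩ := (isCompact_stdSimplex ℝ Θ).exists_isMaxOn
    ⟨_, ite_eq_mem_stdSimplex ℝ (Classical.arbitrary Θ)⟩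
    (RC.Irf_continuous P).continuousOn
  obtain ⟨hπs0, hπs1⟩ := hπsmem
  have hmax : ∀ π ∈ stdSimplex ℝ Θ, RC.Irf P π ≤ RC.Irf P πs := fun π hπ => hπsmax hπ
  apply le_antisymm
  · refine le_trans (iInf_le _ ⟨fun y => ∑ θ', πs θ' * P θ' y,
      fun y => RC.Pbar_nonneg πs P hπs0 hP0 y, RC.Pbar_sum πs P hπs1 hP1⟩) ?_
    refine le_trans (iSup_le fun θ0 =>
      RC.hard_dir P hP0 hP1 πs hπs0 hπs1 hmax θ0) ?_
    rw [← RC.J_eq πs P hπs0 hπs1 hP0 hP1]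
    exact le_iSup_of_le ⟨πs, hπs0, hπs1⟩ le_rfl
  · refine iSup_le fun π => le_iInf fun q => ?_
    calc ∑ θ, ENNReal.ofReal (π.1 θ) * finKL (P θ) (fun y => ∑ θ', π.1 θ' * P θ' y)
        ≤ ∑ θ, ENNReal.ofReal (π.1 θ) * finKL (P θ) (fun y => ∑ θ', π.1 θ' * P θ' y)
          + finKL (fun y => ∑ θ', π.1 θ' * P θ' y) q.1 := le_self_add
      _ = ∑ θ, ENNReal.ofReal (π.1 θ) * finKL (P θ) q.1 :=
          (RC.comp_ennreal π.1 P q.1 π.2.1 π.2.2 hP0 hP1 q.2.1 q.2.2).symm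
      _ ≤ ∑ θ, ENNReal.ofReal (π.1 θ) * (⨆ θ', finKL (P θ') q.1) :=
          Finset.sum_le_sum fun θ _ => mul_le_mul_right (le_iSup (fun θ' => finKL (P θ') q.1) θ) _
      _ = (∑ θ, ENNReal.ofReal (π.1 θ)) * (⨆ θ', finKL (P θ') q.1) :=
          (Finset.sum_mul _ _ _).symm
      _ = ⨆ θ', finKL (P θ') q.1 := by
          rw [← ENNReal.ofReal_sum_of_nonneg (fun θ _ => π.2.1 θ), π.2.2,
            ENNReal.ofReal_one, one_mul]
end

section
/- Minimax equals maximin for expected relative entropy (finite case): with Θ, Y finite, min_Q max_π Σ_θ π(θ) D(P_θ‖Q) = max_π min_Q Σ_θ π(θ) D(P_θ‖Q) = max_π I_π(θ;Y), and the minimax Q is the mixture under the capacity-attaining prior. -/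
open scoped ENNReal BigOperators

namespace MinimaxAux

/-- Real-valued relative entropy (junk value when absolute continuity fails). -/
noncomputable def klR {Y : Type*} [Fintype Y] (p q : Y → ℝ) : ℝ :=
  ∑ y, p y * Real.log (p y / q y)

/-- The mixture distribution. -/
noncomputable def mixf {Θ Y : Type*} [Fintype Θ] [Fintype Y] (P : Θ → Y → ℝ) (π : Θ → ℝ) :
    Y → ℝ := fun y => ∑ θ, π θ * P θ y

/-- Real-valued mutual information. -/
noncomputable def IRf {Θ Y : Type*} [Fintype Θ] [Fintype Y] (P : Θ → Y → ℝ) (π : Θ → ℝ) :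
    ℝ := ∑ θ, π θ * klR (P θ) (mixf P π)

section
variable {Θ Y : Type*} [Fintype Θ] [Fintype Y]

lemma log_lb {a b : ℝ} (ha : 0 < a) (hb : 0 < b) : 1 - b / a ≤ Real.log (a / b) := by
  have h := Real.log_le_sub_one_of_pos (show (0:ℝ) < b / a by positivity)
  have h2 : Real.log (a / b) = - Real.log (b / a) := by
    rw [← Real.log_inv, inv_div]
  linarith [h, h2]

lemma term_lb {p q : ℝ} (hp : 0 < p) (hq : 0 < q) :
    p - q ≤ p * Real.log (p / q) := by
  have h := log_lb hp hq
  have h2 := mul_le_mul_of_nonneg_left h (le_of_lt hp)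
  have h3 : p * (1 - q / p) = p - q := by field_simp
  linarith [h2, h3]

/-- Gibbs' inequality. -/
lemma gibbs {p q : Y → ℝ} (hp0 : ∀ y, 0 ≤ p y)
    (hp1 : ∑ y, p y = 1) (hq1 : ∑ y, q y ≤ 1)
    (hac : ∀ y, q y = 0 → p y = 0) (hq0 : ∀ y, 0 ≤ q y) :
    0 ≤ klR p q := by
  classical
  have key : ∀ y, (if 0 < p y then p y - q y else 0) ≤ p y * Real.log (p y / q y) := by
    intro y
    by_cases hp : 0 < p y
    · have hq : 0 < q y := lt_of_le_of_ne (hq0 y) fun h => by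
        have := hac y h.symm; exact absurd this (ne_of_gt hp)
      simpa [hp] using term_lb hp hq
    · have : p y = 0 := le_antisymm (not_lt.mp hp) (hp0 y)
      simp [hp, this]
  have hsum : (0:ℝ) ≤ ∑ y, (if 0 < p y then p y - q y else 0) := by
    have e1 : ∑ y, (if 0 < p y then p y - q y else 0)
        = (∑ y, (if 0 < p y then p y else 0)) - ∑ y, (if 0 < p y then q y else 0) := by
      rw [← Finset.sum_sub_distrib]; apply Finset.sum_congr rfl; intro y _
      split <;> simp
    have e2 : (∑ y, (if 0 < p y then p y else 0)) = 1 := by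
      rw [← hp1]; apply Finset.sum_congr rfl; intro y _
      split
      · rfl
      · next h => simp [le_antisymm (not_lt.mp h) (hp0 y)]
    have e3 : (∑ y, (if 0 < p y then q y else 0)) ≤ 1 := by
      refine le_trans (Finset.sum_le_sum fun y _ => ?_) hq1
      split
      · exact le_rfl
      · exact hq0 y
    rw [e1, e2]; linarith
  exact le_trans hsum (Finset.sum_le_sum fun y _ => key y)

lemma swap_sum (π : Θ → ℝ) (f : Θ → Y → ℝ) :
    (∑ θ, π θ * ∑ y, f θ y) = ∑ y, ∑ θ, π θ * f θ y := by
  simp_rw [Finset.mul_sum]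
  exact Finset.sum_comm

/-- Chain rule / compensation identity. -/
lemma chain (π : Θ → ℝ) (P : Θ → Y → ℝ) (q : Y → ℝ)
    (hπ : ∀ θ, 0 ≤ π θ) (hP : ∀ θ y, 0 ≤ P θ y)
    (hq : ∀ y, 0 < mixf P π y → 0 < q y) :
    ∑ θ, π θ * klR (P θ) q
      = (∑ θ, π θ * klR (P θ) (mixf P π)) + klR (mixf P π) q := by
  unfold klR mixf
  unfold mixf at hq
  rw [swap_sum, swap_sum, ← Finset.sum_add_distrib]
  apply Finset.sum_congr rfl
  intro y _
  by_cases hm : 0 < ∑ θ', π θ' * P θ' y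
  · have hqy : 0 < q y := hq y hm
    have key : ∀ θ, π θ * (P θ y * Real.log (P θ y / q y))
        = π θ * (P θ y * Real.log (P θ y / (∑ θ', π θ' * P θ' y)))
          + (π θ * P θ y) * Real.log ((∑ θ', π θ' * P θ' y) / q y) := by
      intro θ
      by_cases hpy : 0 < π θ * P θ y
      · have hPy : 0 < P θ y := by
          rcases (mul_pos_iff.mp hpy) with ⟨_, h⟩ | ⟨h1, _⟩
          · exact h
          · exact absurd h1 (not_lt.mpr (hπ θ))
        have hsplit : Real.log (P θ y / q y)
            = Real.log (P θ y / (∑ θ', π θ' * P θ' y))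
              + Real.log ((∑ θ', π θ' * P θ' y) / q y) := by
          rw [← Real.log_mul (by positivity) (by positivity)]
          congr 1
          field_simp
        rw [hsplit]; ring
      · have h0 : π θ * P θ y = 0 := le_antisymm (not_lt.mp hpy)
          (mul_nonneg (hπ θ) (hP θ y))
        have e1 : π θ * (P θ y * Real.log (P θ y / q y)) = 0 := by
          rw [← mul_assoc, h0, zero_mul]
        have e2 : π θ * (P θ y * Real.log (P θ y / (∑ θ', π θ' * P θ' y))) = 0 := by
          rw [← mul_assoc, h0, zero_mul]
        rw [e1, e2, h0]; ring
    calc ∑ θ, π θ * (P θ y * Real.log (P θ y / q y))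
        = ∑ θ, (π θ * (P θ y * Real.log (P θ y / (∑ θ', π θ' * P θ' y)))
            + (π θ * P θ y) * Real.log ((∑ θ', π θ' * P θ' y) / q y)) :=
          Finset.sum_congr rfl fun θ _ => key θ
      _ = (∑ θ, π θ * (P θ y * Real.log (P θ y / (∑ θ', π θ' * P θ' y))))
            + (∑ θ, π θ * P θ y) * Real.log ((∑ θ', π θ' * P θ' y) / q y) := by
          rw [Finset.sum_add_distrib, Finset.sum_mul]
  · have hm0 : ∑ θ', π θ' * P θ' y = 0 :=
      le_antisymm (not_lt.mp hm)
        (Finset.sum_nonneg fun θ _ => mul_nonneg (hπ θ) (hP θ y))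
    have hall : ∀ θ, π θ * P θ y = 0 := by
      intro θ
      have := (Finset.sum_eq_zero_iff_of_nonneg
        (fun θ _ => mul_nonneg (hπ θ) (hP θ y))).mp hm0
      exact this θ (Finset.mem_univ θ)
    have z1 : ∀ r : ℝ, ∑ θ, π θ * (P θ y * Real.log (P θ y / r)) = 0 := by
      intro r
      apply Finset.sum_eq_zero; intro θ _
      rw [← mul_assoc, hall θ, zero_mul]
    rw [z1, z1, hm0]
    simp

lemma mixf_nonneg (P : Θ → Y → ℝ) (π : Θ → ℝ) (hπ : ∀ θ, 0 ≤ π θ)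
    (hP : ∀ θ y, 0 ≤ P θ y) (y : Y) : 0 ≤ mixf P π y :=
  Finset.sum_nonneg fun θ _ => mul_nonneg (hπ θ) (hP θ y)

lemma mixf_sum (P : Θ → Y → ℝ) (π : Θ → ℝ) (hP1 : ∀ θ, ∑ y, P θ y = 1)
    (hπ1 : ∑ θ, π θ = 1) : ∑ y, mixf P π y = 1 := by
  unfold mixf
  rw [Finset.sum_comm]
  simp only [← Finset.mul_sum, hP1, mul_one, hπ1]

lemma IRf_eq_entropy (P : Θ → Y → ℝ)
    (hP : ∀ θ y, 0 ≤ P θ y) (π : Θ → ℝ) (hπ : ∀ θ, 0 ≤ π θ) :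
    IRf P π = (∑ θ, π θ * ∑ y, P θ y * Real.log (P θ y))
      - ∑ y, (mixf P π y) * Real.log (mixf P π y) := by
  unfold IRf klR mixf
  rw [swap_sum, swap_sum, ← Finset.sum_sub_distrib]
  apply Finset.sum_congr rfl
  intro y _
  have hm0 : 0 ≤ ∑ θ', π θ' * P θ' y :=
    Finset.sum_nonneg fun θ _ => mul_nonneg (hπ θ) (hP θ y)
  have key : ∀ θ, π θ * (P θ y * Real.log (P θ y / ∑ θ', π θ' * P θ' y))
      = π θ * (P θ y * Real.log (P θ y)) - (π θ * P θ y) * Real.log (∑ θ', π θ' * P θ' y) := by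
    intro θ
    by_cases hpy : 0 < π θ * P θ y
    · have hPy : 0 < P θ y := by
        rcases mul_pos_iff.mp hpy with ⟨_, h⟩ | ⟨h1, _⟩
        · exact h
        · exact absurd h1 (not_lt.mpr (hπ θ))
      have hmy : 0 < ∑ θ', π θ' * P θ' y :=
        lt_of_lt_of_le hpy (Finset.single_le_sum
          (f := fun θ' => π θ' * P θ' y)
          (fun θ' _ => mul_nonneg (hπ θ') (hP θ' y)) (Finset.mem_univ θ))
      rw [Real.log_div (ne_of_gt hPy) (ne_of_gt hmy)]
      ring
    · have h0 : π θ * P θ y = 0 := le_antisymm (not_lt.mp hpy)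
        (mul_nonneg (hπ θ) (hP θ y))
      have e1 : ∀ r : ℝ, π θ * (P θ y * r) = 0 := fun r => by
        rw [← mul_assoc, h0, zero_mul]
      rw [e1, e1, h0]; ring
  rw [Finset.sum_congr rfl fun θ _ => key θ, Finset.sum_sub_distrib, Finset.sum_mul]

lemma exists_maximizer [Nonempty Θ] (P : Θ → Y → ℝ) (hP : ∀ θ y, 0 ≤ P θ y) :
    ∃ πs ∈ stdSimplex ℝ Θ, ∀ π ∈ stdSimplex ℝ Θ, IRf P π ≤ IRf P πs := by
  classical
  set G : (Θ → ℝ) → ℝ := fun π =>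
    (∑ θ, π θ * ∑ y, P θ y * Real.log (P θ y))
      - ∑ y, (mixf P π y) * Real.log (mixf P π y) with hG
  have hcont : Continuous G := by
    apply Continuous.sub
    · exact continuous_finset_sum _ fun θ _ => (continuous_apply θ).mul continuous_const
    · apply continuous_finset_sum _ fun y _ => ?_
      exact Real.continuous_mul_log.comp
        (continuous_finset_sum _ fun θ _ => (continuous_apply θ).mul continuous_const)
  obtain ⟨πs, hmem, hmax⟩ := (isCompact_stdSimplex ℝ Θ).exists_isMaxOn
    ⟨_, single_mem_stdSimplex ℝ (Classical.arbitrary Θ)⟩ hcont.continuousOn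
  refine ⟨πs, hmem, fun π hπ => ?_⟩
  rw [IRf_eq_entropy P hP π hπ.1, IRf_eq_entropy P hP πs hmem.1]
  exact hmax hπ

/-- Kuhn–Tucker conditions at a capacity-achieving prior. -/
lemma kkt (P : Θ → Y → ℝ) (hP0 : ∀ θ y, 0 ≤ P θ y)
    (hP1 : ∀ θ, ∑ y, P θ y = 1) (πs : Θ → ℝ) (hπ0 : ∀ θ, 0 ≤ πs θ)
    (hπ1 : ∑ θ, πs θ = 1)
    (hmax : ∀ π : Θ → ℝ, (∀ θ, 0 ≤ π θ) → (∑ θ, π θ) = 1 → IRf P π ≤ IRf P πs)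
    (θ0 : Θ) :
    (∀ y, mixf P πs y = 0 → P θ0 y = 0) ∧ klR (P θ0) (mixf P πs) ≤ IRf P πs := by
  classical
  set C := IRf P πs with hC
  set m : Y → ℝ := mixf P πs with hmdef
  have hm0 : ∀ y, 0 ≤ m y := mixf_nonneg P πs hπ0 hP0
  have hm1 : ∑ y, m y = 1 := mixf_sum P πs hP1 hπ1
  have master : ∀ t : ℝ, 0 < t → t < 1 →
      klR (P θ0) (fun y => (1 - t) * m y + t * P θ0 y) ≤ C := by
    intro t ht0 ht1
    set πt : Θ → ℝ := fun θ => (1 - t) * πs θ + t * (if θ = θ0 then 1 else 0) with hπt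
    have hπt0 : ∀ θ, 0 ≤ πt θ := by
      intro θ
      have h0 : (0:ℝ) ≤ (if θ = θ0 then (1:ℝ) else 0) := by split <;> norm_num
      have h1 : (0:ℝ) ≤ (1 - t) * πs θ := mul_nonneg (by linarith) (hπ0 θ)
      have h2 : (0:ℝ) ≤ t * (if θ = θ0 then (1:ℝ) else 0) := mul_nonneg (le_of_lt ht0) h0
      simpa [hπt] using add_nonneg h1 h2
    have hπt1 : ∑ θ, πt θ = 1 := by
      simp only [hπt]
      rw [Finset.sum_add_distrib, ← Finset.mul_sum, ← Finset.mul_sum, hπ1,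
        Finset.sum_ite_eq' Finset.univ θ0 (fun _ => (1:ℝ))]
      simp
    set mt : Y → ℝ := fun y => (1 - t) * m y + t * P θ0 y with hmtdef
    have hmt : mixf P πt = mt := by
      funext y
      show ∑ θ, πt θ * P θ y = _
      have e : ∀ θ, πt θ * P θ y
          = (1 - t) * (πs θ * P θ y) + t * (if θ = θ0 then P θ y else 0) := by
        intro θ; simp only [hπt]; split <;> ring
      rw [Finset.sum_congr rfl fun θ _ => e θ, Finset.sum_add_distrib,
        ← Finset.mul_sum, ← Finset.mul_sum,
        Finset.sum_ite_eq' Finset.univ θ0 (fun θ => P θ y)]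
      simp [hmdef, mixf, hmtdef]
    have hmt0 : ∀ y, 0 ≤ mt y := fun y =>
      add_nonneg (mul_nonneg (by linarith) (hm0 y)) (mul_nonneg (le_of_lt ht0) (hP0 θ0 y))
    have hmt1 : ∑ y, mt y = 1 := by
      simp only [hmtdef]
      rw [Finset.sum_add_distrib, ← Finset.mul_sum, ← Finset.mul_sum, hm1, hP1]
      ring
    have hsplit : IRf P πt
        = (1 - t) * (∑ θ, πs θ * klR (P θ) mt) + t * klR (P θ0) mt := by
      unfold IRf
      rw [hmt]
      have e : ∀ θ, πt θ * klR (P θ) mt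
          = (1 - t) * (πs θ * klR (P θ) mt)
            + t * (if θ = θ0 then klR (P θ) mt else 0) := by
        intro θ; simp only [hπt]; split <;> ring
      rw [Finset.sum_congr rfl fun θ _ => e θ, Finset.sum_add_distrib,
        ← Finset.mul_sum, ← Finset.mul_sum,
        Finset.sum_ite_eq' Finset.univ θ0 (fun θ => klR (P θ) mt)]
      simp
    have hchain : ∑ θ, πs θ * klR (P θ) mt = C + klR m mt := by
      rw [chain πs P mt hπ0 hP0 (fun y hy => by
        have h1 : 0 < (1 - t) * m y := mul_pos (by linarith) hy
        have h2 : 0 ≤ t * P θ0 y := mul_nonneg (le_of_lt ht0) (hP0 θ0 y)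
        show 0 < mt y
        simp only [hmtdef]; linarith)]
      rw [hC]
      unfold IRf
      rw [hmdef]
    have hgibbs : 0 ≤ klR m mt := by
      apply gibbs hm0 hm1 (le_of_eq hmt1) _ hmt0
      intro y hy
      have h1 : 0 ≤ (1 - t) * m y := mul_nonneg (by linarith) (hm0 y)
      have h2 : 0 ≤ t * P θ0 y := mul_nonneg (le_of_lt ht0) (hP0 θ0 y)
      have h3 : (1 - t) * m y = 0 := by
        simp only [hmtdef] at hy; linarith
      rcases mul_eq_zero.mp h3 with h | h
      · linarith
      · exact h
    have hle := hmax πt hπt0 hπt1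
    rw [hsplit, hchain] at hle
    have h4 : t * klR (P θ0) mt ≤ t * C := by nlinarith
    exact (mul_le_mul_iff_right₀ ht0).mp h4
  -- absolute continuity
  have hac : ∀ y, m y = 0 → P θ0 y = 0 := by
    by_contra hcon
    push_neg at hcon
    obtain ⟨y0, hy0, hp0⟩ := hcon
    have hc : 0 < P θ0 y0 := lt_of_le_of_ne (hP0 θ0 y0) (Ne.symm hp0)
    set B0 := ∑ y, (if y = y0 then 0 else P θ0 y * Real.log (P θ0 y)) with hB0
    have hlower : ∀ t : ℝ, 0 < t → t < 1 →
        P θ0 y0 * (-Real.log t) + B0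
          ≤ klR (P θ0) (fun y => (1 - t) * m y + t * P θ0 y) := by
      intro t ht0 ht1
      set mt : Y → ℝ := fun y => (1 - t) * m y + t * P θ0 y with hmtdef
      have hmt0 : ∀ y, 0 ≤ mt y := fun y =>
        add_nonneg (mul_nonneg (by linarith) (hm0 y)) (mul_nonneg (le_of_lt ht0) (hP0 θ0 y))
      have hmt1 : ∑ y, mt y = 1 := by
        simp only [hmtdef]
        rw [Finset.sum_add_distrib, ← Finset.mul_sum, ← Finset.mul_sum, hm1, hP1]
        ring
      have hmtle1 : ∀ y, mt y ≤ 1 := by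
        intro y
        rw [← hmt1]
        exact Finset.single_le_sum (fun y _ => hmt0 y) (Finset.mem_univ y)
      have key : ∀ y, (if y = y0 then P θ0 y0 * (-Real.log t) else 0)
          + (if y = y0 then 0 else P θ0 y * Real.log (P θ0 y))
          ≤ P θ0 y * Real.log (P θ0 y / mt y) := by
        intro y
        by_cases hyy : y = y0
        · rw [if_pos hyy, if_pos hyy, add_zero, hyy]
          have hmty : mt y0 = t * P θ0 y0 := by
            simp only [hmtdef, hy0]; ring
          rw [hmty]
          have hratio : P θ0 y0 / (t * P θ0 y0) = 1 / t := by
            rw [mul_comm, div_mul_eq_div_div, div_self (ne_of_gt hc)]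
          rw [hratio, one_div, Real.log_inv]
        · rw [if_neg hyy, if_neg hyy, zero_add]
          by_cases hp : 0 < P θ0 y
          · have hmty : 0 < mt y := by
              have h1 : 0 < t * P θ0 y := mul_pos ht0 hp
              have h2 : 0 ≤ (1 - t) * m y := mul_nonneg (by linarith) (hm0 y)
              simp only [hmtdef]; linarith
            have hlog : Real.log (P θ0 y) ≤ Real.log (P θ0 y / mt y) := by
              rw [Real.log_div (ne_of_gt hp) (ne_of_gt hmty)]
              have := Real.log_nonpos (hmt0 y) (hmtle1 y)
              linarith
            exact mul_le_mul_of_nonneg_left hlog (le_of_lt hp)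
          · have h0 : P θ0 y = 0 := le_antisymm (not_lt.mp hp) (hP0 θ0 y)
            simp [h0]
      calc P θ0 y0 * (-Real.log t) + B0
          = ∑ y, ((if y = y0 then P θ0 y0 * (-Real.log t) else 0)
              + (if y = y0 then 0 else P θ0 y * Real.log (P θ0 y))) := by
            rw [Finset.sum_add_distrib, Finset.sum_ite_eq' Finset.univ y0
              (fun _ => P θ0 y0 * (-Real.log t))]
            simp [hB0]
        _ ≤ ∑ y, P θ0 y * Real.log (P θ0 y / mt y) := Finset.sum_le_sum fun y _ => key y
        _ = klR (P θ0) mt := rfl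
    set t := min (1/2 : ℝ) (Real.exp ((B0 - C - 1) / P θ0 y0)) with htdef
    have ht0 : 0 < t := lt_min (by norm_num) (Real.exp_pos _)
    have ht1 : t < 1 := lt_of_le_of_lt (min_le_left _ _) (by norm_num)
    have hlogt : Real.log t ≤ (B0 - C - 1) / P θ0 y0 := by
      calc Real.log t ≤ Real.log (Real.exp ((B0 - C - 1) / P θ0 y0)) :=
            Real.log_le_log ht0 (min_le_right _ _)
        _ = (B0 - C - 1) / P θ0 y0 := Real.log_exp _
    have h1 : C + 1 - B0 ≤ P θ0 y0 * (-Real.log t) := by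
      have h2 := mul_le_mul_of_nonneg_left hlogt (le_of_lt hc)
      rw [mul_div_cancel₀ _ (ne_of_gt hc)] at h2
      linarith
    have h2 := hlower t ht0 ht1
    have h3 := master t ht0 ht1
    linarith
  refine ⟨hac, ?_⟩
  set D0 := klR (P θ0) m with hD0
  set R := ∑ y, (if 0 < P θ0 y then P θ0 y * (P θ0 y / m y) else 0) with hR
  have hstep : ∀ t : ℝ, 0 < t → t < 1 → D0 - C ≤ t * (R - 1) := by
    intro t ht0 ht1
    set mt : Y → ℝ := fun y => (1 - t) * m y + t * P θ0 y with hmtdef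
    have key : ∀ y, P θ0 y * Real.log (P θ0 y / m y)
        + (if 0 < P θ0 y then P θ0 y * (t * (1 - P θ0 y / m y)) else 0)
        ≤ P θ0 y * Real.log (P θ0 y / mt y) := by
      intro y
      by_cases hp : 0 < P θ0 y
      · have hmy : 0 < m y := by
          rcases lt_or_eq_of_le (hm0 y) with h | h
          · exact h
          · exact absurd (hac y h.symm) (ne_of_gt hp)
        have hmty : 0 < mt y := by
          have h1 : 0 < (1 - t) * m y := mul_pos (by linarith) hmy
          have h2 : 0 ≤ t * P θ0 y := mul_nonneg (le_of_lt ht0) (hP0 θ0 y)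
          simp only [hmtdef]; linarith
        have hsplit : Real.log (P θ0 y / mt y)
            = Real.log (P θ0 y / m y) + Real.log (m y / mt y) := by
          rw [← Real.log_mul (by positivity) (by positivity)]
          congr 1
          field_simp
        have hlb : t * (1 - P θ0 y / m y) ≤ Real.log (m y / mt y) := by
          have hll := log_lb hmy hmty
          have e : 1 - mt y / m y = t * (1 - P θ0 y / m y) := by
            simp only [hmtdef]
            field_simp
            ring
          rw [e] at hll
          exact hll
        rw [hsplit, if_pos hp, mul_add]
        have := mul_le_mul_of_nonneg_left hlb (le_of_lt hp)
        linarith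
      · have hp0 : P θ0 y = 0 := le_antisymm (not_lt.mp hp) (hP0 θ0 y)
        simp [hp0, hp]
    have hsum : D0 + t * (1 - R) ≤ klR (P θ0) mt := by
      have e1 : ∑ y, (if 0 < P θ0 y then P θ0 y * (t * (1 - P θ0 y / m y)) else 0)
          = t * (1 - R) := by
        have e2 : ∀ y, (if 0 < P θ0 y then P θ0 y * (t * (1 - P θ0 y / m y)) else 0)
            = t * ((if 0 < P θ0 y then P θ0 y else 0)
              - (if 0 < P θ0 y then P θ0 y * (P θ0 y / m y) else 0)) := by
          intro y; split <;> ring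
        rw [Finset.sum_congr rfl fun y _ => e2 y, ← Finset.mul_sum]
        congr 1
        rw [Finset.sum_sub_distrib, ← hR]
        congr 1
        rw [← hP1 θ0]
        apply Finset.sum_congr rfl
        intro y _
        split
        · rfl
        · next h => simp [le_antisymm (not_lt.mp h) (hP0 θ0 y)]
      have e0 : D0 = ∑ y, P θ0 y * Real.log (P θ0 y / m y) := rfl
      calc D0 + t * (1 - R)
          = ∑ y, (P θ0 y * Real.log (P θ0 y / m y)
            + (if 0 < P θ0 y then P θ0 y * (t * (1 - P θ0 y / m y)) else 0)) := by
            rw [Finset.sum_add_distrib, e1, e0]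
        _ ≤ ∑ y, P θ0 y * Real.log (P θ0 y / mt y) := Finset.sum_le_sum fun y _ => key y
        _ = klR (P θ0) mt := rfl
    have hm := master t ht0 ht1
    have hm' : klR (P θ0) mt ≤ C := hm
    linarith
  by_contra hD
  push_neg at hD
  have hd : 0 < D0 - C := by linarith
  rcases le_or_gt R 1 with hR1 | hR1
  · have := hstep (1/2) (by norm_num) (by norm_num)
    nlinarith
  · have hRpos : (0:ℝ) < 2 * (R - 1) := by linarith
    set t := min (1/2 : ℝ) ((D0 - C) / (2 * (R - 1))) with htdef
    have ht0 : 0 < t := lt_min (by norm_num) (div_pos hd hRpos)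
    have ht1 : t < 1 := lt_of_le_of_lt (min_le_left _ _) (by norm_num)
    have h1 := hstep t ht0 ht1
    have h2 : t * (R - 1) ≤ ((D0 - C) / (2 * (R - 1))) * (R - 1) :=
      mul_le_mul_of_nonneg_right (min_le_right _ _) (by linarith)
    have hne : 2 * (R - 1) ≠ 0 := ne_of_gt hRpos
    have h3 : ((D0 - C) / (2 * (R - 1))) * (R - 1) = (D0 - C) / 2 := by
      field_simp
    linarith

lemma finKL_eq_ofReal {p q : Y → ℝ} (h : ∀ y, q y = 0 → p y = 0) :
    finKL p q = ENNReal.ofReal (klR p q) := if_pos h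

lemma finKL_eq_top {p q : Y → ℝ} (h : ¬ ∀ y, q y = 0 → p y = 0) :
    finKL p q = ⊤ := if_neg h

lemma mixf_ac {P : Θ → Y → ℝ} {π : Θ → ℝ} (hπ0 : ∀ θ, 0 ≤ π θ)
    (hP0 : ∀ θ y, 0 ≤ P θ y) {θ : Θ} (hθ : 0 < π θ) {y : Y}
    (hy : mixf P π y = 0) : P θ y = 0 := by
  have h := (Finset.sum_eq_zero_iff_of_nonneg
    (fun θ' _ => mul_nonneg (hπ0 θ') (hP0 θ' y))).mp hy θ (Finset.mem_univ θ)
  rcases mul_eq_zero.mp h with h' | h'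
  · exact absurd h' (ne_of_gt hθ)
  · exact h'

lemma ac_mixf {P : Θ → Y → ℝ} {π : Θ → ℝ} (hπ0 : ∀ θ, 0 ≤ π θ) {q : Y → ℝ}
    (hac : ∀ θ, 0 < π θ → ∀ y, q y = 0 → P θ y = 0) :
    ∀ y, q y = 0 → mixf P π y = 0 := by
  intro y hy
  apply Finset.sum_eq_zero
  intro θ _
  by_cases h : 0 < π θ
  · rw [hac θ h y hy, mul_zero]
  · rw [le_antisymm (not_lt.mp h) (hπ0 θ), zero_mul]

lemma IRf_nonneg (P : Θ → Y → ℝ) (hP0 : ∀ θ y, 0 ≤ P θ y)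
    (hP1 : ∀ θ, ∑ y, P θ y = 1) (π : Θ → ℝ) (hπ0 : ∀ θ, 0 ≤ π θ)
    (hπ1 : ∑ θ, π θ = 1) : 0 ≤ IRf P π := by
  apply Finset.sum_nonneg
  intro θ _
  rcases lt_or_eq_of_le (hπ0 θ) with h | h
  · refine mul_nonneg (le_of_lt h) (gibbs (hP0 θ) (hP1 θ)
      (le_of_eq (mixf_sum P π hP1 hπ1)) (fun y hy => mixf_ac hπ0 hP0 h hy)
      (mixf_nonneg P π hπ0 hP0))
  · rw [← h, zero_mul]

lemma payR_ge (P : Θ → Y → ℝ) (hP0 : ∀ θ y, 0 ≤ P θ y)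
    (hP1 : ∀ θ, ∑ y, P θ y = 1) (π : Θ → ℝ) (hπ0 : ∀ θ, 0 ≤ π θ)
    (hπ1 : ∑ θ, π θ = 1) (q : Y → ℝ) (hq0 : ∀ y, 0 ≤ q y) (hq1 : ∑ y, q y = 1)
    (hac : ∀ θ, 0 < π θ → ∀ y, q y = 0 → P θ y = 0) :
    IRf P π ≤ ∑ θ, π θ * klR (P θ) q := by
  have hmq := ac_mixf hπ0 hac
  rw [chain π P q hπ0 hP0 (fun y hy => by
    by_contra h
    have hq' : q y = 0 := le_antisymm (not_lt.mp h) (hq0 y)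
    rw [hmq y hq'] at hy
    exact lt_irrefl 0 hy)]
  have := gibbs (p := mixf P π) (q := q) (mixf_nonneg P π hπ0 hP0)
    (mixf_sum P π hP1 hπ1) (le_of_eq hq1) hmq hq0
  unfold IRf
  linarith

lemma pay_eq_ofReal (P : Θ → Y → ℝ) (hP0 : ∀ θ y, 0 ≤ P θ y)
    (hP1 : ∀ θ, ∑ y, P θ y = 1) (π : Θ → ℝ) (hπ0 : ∀ θ, 0 ≤ π θ)
    (q : Y → ℝ) (hq0 : ∀ y, 0 ≤ q y) (hq1 : ∑ y, q y = 1)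
    (hac : ∀ θ, 0 < π θ → ∀ y, q y = 0 → P θ y = 0) :
    ∑ θ, ENNReal.ofReal (π θ) * finKL (P θ) q
      = ENNReal.ofReal (∑ θ, π θ * klR (P θ) q) := by
  rw [ENNReal.ofReal_sum_of_nonneg (fun θ _ => ?_)]
  · apply Finset.sum_congr rfl
    intro θ _
    rcases lt_or_eq_of_le (hπ0 θ) with h | h
    · rw [finKL_eq_ofReal (hac θ h), ← ENNReal.ofReal_mul (le_of_lt h)]
    · rw [← h]
      simp
  · rcases lt_or_eq_of_le (hπ0 θ) with h | h
    · exact mul_nonneg (le_of_lt h)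
        (gibbs (hP0 θ) (hP1 θ) (le_of_eq hq1) (hac θ h) hq0)
    · rw [← h, zero_mul]

lemma pay_eq_top (P : Θ → Y → ℝ) (π : Θ → ℝ) (q : Y → ℝ) (θ1 : Θ)
    (h1 : 0 < π θ1) (h2 : ¬ ∀ y, q y = 0 → P θ1 y = 0) :
    ∑ θ, ENNReal.ofReal (π θ) * finKL (P θ) q = ⊤ := by
  rw [ENNReal.sum_eq_top]
  refine ⟨θ1, Finset.mem_univ θ1, ?_⟩
  rw [finKL_eq_top h2, ENNReal.mul_top]
  simp only [ne_eq, ENNReal.ofReal_eq_zero, not_le]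
  exact h1

/-- Main auxiliary theorem. -/
theorem main [Nonempty Θ] [Nonempty Y]
    (P : Θ → Y → ℝ) (hP0 : ∀ θ y, 0 ≤ P θ y) (hP1 : ∀ θ, ∑ y, P θ y = 1)
    (pay : {π : Θ → ℝ // (∀ θ, 0 ≤ π θ) ∧ ∑ θ, π θ = 1} →
      {q : Y → ℝ // (∀ y, 0 ≤ q y) ∧ ∑ y, q y = 1} → ℝ≥0∞)
    (payd : ∀ π q, pay π q = ∑ θ, ENNReal.ofReal (π.1 θ) * finKL (P θ) q.1)
    (mix : {π : Θ → ℝ // (∀ θ, 0 ≤ π θ) ∧ ∑ θ, π θ = 1} →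
      {q : Y → ℝ // (∀ y, 0 ≤ q y) ∧ ∑ y, q y = 1})
    (mixd : ∀ π, (mix π).1 = mixf P π.1) :
    (⨅ q, ⨆ π, pay π q) = (⨆ π, ⨅ q, pay π q) ∧
      (⨆ π, ⨅ q, pay π q) = (⨆ π, pay π (mix π)) ∧
      ∀ πs, pay πs (mix πs) = (⨆ π, pay π (mix π)) →
        (⨆ π, pay π (mix πs)) = ⨅ q, ⨆ π, pay π q := by
  classical
  have hIval : ∀ π, pay π (mix π) = ENNReal.ofReal (IRf P π.1) := by
    intro π
    rw [payd]
    rw [show (mix π).1 = mixf P π.1 from mixd π]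
    rw [pay_eq_ofReal P hP0 hP1 π.1 π.2.1 (mixf P π.1)
      (mixf_nonneg P π.1 π.2.1 hP0) (mixf_sum P π.1 hP1 π.2.2)
      (fun θ hθ y hy => mixf_ac π.2.1 hP0 hθ hy)]
    rfl
  have stepA : ∀ π, (⨅ q, pay π q) = pay π (mix π) := by
    intro π
    refine le_antisymm (iInf_le _ (mix π)) (le_iInf ?_)
    intro q
    by_cases hq : ∀ θ, 0 < π.1 θ → ∀ y, q.1 y = 0 → P θ y = 0
    · rw [hIval, payd, pay_eq_ofReal P hP0 hP1 π.1 π.2.1 q.1 q.2.1 q.2.2 hq]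
      exact ENNReal.ofReal_le_ofReal
        (payR_ge P hP0 hP1 π.1 π.2.1 π.2.2 q.1 q.2.1 q.2.2 hq)
    · push_neg at hq
      obtain ⟨θ1, hθ1, hbad⟩ := hq
      rw [payd π q, pay_eq_top P π.1 q.1 θ1 hθ1 (by push_neg; exact hbad)]
      exact le_top
  have conj2 : (⨆ π, ⨅ q, pay π q) = ⨆ π, pay π (mix π) := iSup_congr stepA
  obtain ⟨π0, hπ0mem, hπ0max⟩ := exists_maximizer P hP0
  have hIle : ∀ π, pay π (mix π) ≤ pay ⟨π0, hπ0mem.1, hπ0mem.2⟩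
      (mix ⟨π0, hπ0mem.1, hπ0mem.2⟩) := by
    intro π
    rw [hIval, hIval]
    exact ENNReal.ofReal_le_ofReal (hπ0max π.1 ⟨π.2.1, π.2.2⟩)
  have key : ∀ πs, (∀ π, pay π (mix π) ≤ pay πs (mix πs)) →
      (⨆ π, pay π (mix πs)) ≤ pay πs (mix πs) := by
    intro πs hs
    have hmaxR : ∀ π' : Θ → ℝ, (∀ θ, 0 ≤ π' θ) → (∑ θ, π' θ) = 1 →
        IRf P π' ≤ IRf P πs.1 := by
      intro π' h1 h2
      have h := hs ⟨π', h1, h2⟩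
      rw [hIval, hIval] at h
      exact (ENNReal.ofReal_le_ofReal_iff
        (IRf_nonneg P hP0 hP1 πs.1 πs.2.1 πs.2.2)).mp h
    have hbd : ∀ θ, finKL (P θ) (mix πs).1 ≤ ENNReal.ofReal (IRf P πs.1) := by
      intro θ
      have h := kkt P hP0 hP1 πs.1 πs.2.1 πs.2.2 hmaxR θ
      rw [mixd, finKL_eq_ofReal h.1]
      exact ENNReal.ofReal_le_ofReal h.2
    apply iSup_le
    intro π
    rw [payd, hIval]
    calc ∑ θ, ENNReal.ofReal (π.1 θ) * finKL (P θ) (mix πs).1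
        ≤ ∑ θ, ENNReal.ofReal (π.1 θ) * ENNReal.ofReal (IRf P πs.1) :=
          Finset.sum_le_sum fun θ _ => mul_le_mul_right (hbd θ) _
      _ = (∑ θ, ENNReal.ofReal (π.1 θ)) * ENNReal.ofReal (IRf P πs.1) := by
          rw [Finset.sum_mul]
      _ = ENNReal.ofReal (∑ θ, π.1 θ) * ENNReal.ofReal (IRf P πs.1) := by
          rw [ENNReal.ofReal_sum_of_nonneg (fun θ _ => π.2.1 θ)]
      _ = ENNReal.ofReal (IRf P πs.1) := by
          rw [π.2.2, ENNReal.ofReal_one, one_mul]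
  have hCeq : (⨆ π, pay π (mix π)) = pay ⟨π0, hπ0mem.1, hπ0mem.2⟩
      (mix ⟨π0, hπ0mem.1, hπ0mem.2⟩) :=
    le_antisymm (iSup_le hIle) (le_iSup (fun π => pay π (mix π)) _)
  have hmaximin_le : (⨆ π, ⨅ q, pay π q) ≤ ⨅ q, ⨆ π, pay π q :=
    iSup_iInf_le_iInf_iSup _
  have hminimax_le : (⨅ q, ⨆ π, pay π q) ≤ ⨆ π, pay π (mix π) := by
    refine le_trans (iInf_le _ (mix ⟨π0, hπ0mem.1, hπ0mem.2⟩)) ?_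
    rw [hCeq]
    exact key _ hIle
  have conj1 : (⨅ q, ⨆ π, pay π q) = ⨆ π, ⨅ q, pay π q :=
    le_antisymm (le_trans hminimax_le (le_of_eq conj2.symm)) hmaximin_le
  refine ⟨conj1, conj2, ?_⟩
  intro πs hπs
  have hIle' : ∀ π, pay π (mix π) ≤ pay πs (mix πs) := fun π => by
    rw [hπs]; exact le_iSup (fun π => pay π (mix π)) π
  refine le_antisymm ?_ (iInf_le _ (mix πs))
  calc (⨆ π, pay π (mix πs)) ≤ pay πs (mix πs) := key πs hIle'
    _ = ⨆ π, pay π (mix π) := hπs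
    _ = ⨆ π, ⨅ q, pay π q := conj2.symm
    _ ≤ ⨅ q, ⨆ π, pay π q := hmaximin_le

end
end MinimaxAux

/-- Minimax equals maximin for expected relative entropy (finite case):
`⨅_Q ⨆_π ∑_θ π(θ) D(P_θ‖Q) = ⨆_π ⨅_Q ∑_θ π(θ) D(P_θ‖Q) = ⨆_π I_π(θ;Y)`,
and the mixture under any capacity-attaining prior is a minimax `Q`. -/
theorem minimax_eq_maximin_relEntropy {Θ Y : Type*} [Fintype Θ] [Fintype Y]
    [Nonempty Θ] [Nonempty Y]
    (P : Θ → Y → ℝ) (hP0 : ∀ θ y, 0 ≤ P θ y) (hP1 : ∀ θ, ∑ y, P θ y = 1) :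
    letI Prior := {π : Θ → ℝ // (∀ θ, 0 ≤ π θ) ∧ ∑ θ, π θ = 1}
    letI Dist := {q : Y → ℝ // (∀ y, 0 ≤ q y) ∧ ∑ y, q y = 1}
    letI pay : Prior → Dist → ℝ≥0∞ :=
      fun π q => ∑ θ, ENNReal.ofReal (π.1 θ) * finKL (P θ) q.1
    letI mix : Prior → Dist := fun π =>
      ⟨fun y => ∑ θ, π.1 θ * P θ y,
        fun y => Finset.sum_nonneg fun θ _ =>
          mul_nonneg (π.2.1 θ) (hP0 θ y),
        by
          rw [Finset.sum_comm]
          simp [← Finset.mul_sum, hP1, π.2.2]⟩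
    letI I : Prior → ℝ≥0∞ := fun π => pay π (mix π)
    (⨅ q, ⨆ π, pay π q) = (⨆ π, ⨅ q, pay π q) ∧
      (⨆ π, ⨅ q, pay π q) = (⨆ π, I π) ∧
      ∀ πs : Prior, I πs = (⨆ π, I π) →
        (⨆ π, pay π (mix πs)) = ⨅ q, ⨆ π, pay π q := by
  exact MinimaxAux.main P hP0 hP1 _ (fun _ _ => rfl) _ (fun _ => rfl)
end
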